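/- Let n ≥ 1 and let x, y be binary words of length n, and let t be an integer with 0 ≤ t ≤ n. Then the following three conditions are equivalent: (1) D_t(x) ∩ D_t(y) = ∅; (2) I_t(x) ∩ I_t(y) = ∅; (3) d_ID(x, y) > 2t. -/
import Mathlib


/-- Length of a longest common subsequence of two binary words. -/
noncomputable def lcsLen (x y : List Bool) : ℕ :=
  sSup {n | ∃ z : List Bool, z.length = n ∧ z.Sublist x ∧ z.Sublist y}

/-- The insdel distance `d_ID(x,y) = |x| + |y| - 2·LCS(x,y)`. -/
noncomputable def dID (x y : List Bool) : ℕ :=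
  x.length + y.length - 2 * lcsLen x y

/-- Number of runs (maximal blocks of consecutive equal symbols) of a binary word. -/
def runs (x : List Bool) : ℕ := (x.destutter (· ≠ ·)).length

/-- Maximum run length of a binary word: the largest `n` such that some constant
word of length `n` occurs as a block of consecutive symbols of `x`. -/
noncomputable def maxRun (x : List Bool) : ℕ :=
  sSup {n | ∃ b : Bool, (List.replicate n b).IsInfix x}

/-- `D_t(x)`: the words of length `|x| - t` that are subsequences of `x`. -/
def Dset (t : ℕ) (x : List Bool) : Set (List Bool) :=
  {z | z.length = x.length - t ∧ z.Sublist x}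

/-- `I_t(x)`: the words of length `|x| + t` that are supersequences of `x`. -/
def Iset (t : ℕ) (x : List Bool) : Set (List Bool) :=
  {z | z.length = x.length + t ∧ x.Sublist z}

/-- A systematic encoding `x ↦ (x, p(x))` with redundancy words `p x` of length `r`
is a function-correcting insdel code for `f` correcting `t` insdel errors. -/
noncomputable def IsFCIDC {k : ℕ} {S : Type*} (f : (Fin k → Bool) → S) (t r : ℕ)
    (p : (Fin k → Bool) → List Bool) : Prop :=
  (∀ x, (p x).length = r) ∧
  ∀ x y, f x ≠ f y → 2 * t < dID (List.ofFn x ++ p x) (List.ofFn y ++ p y)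

/-- The optimal redundancy `r^f_ID(k,t)`. -/
noncomputable def optRed {k : ℕ} {S : Type*} (f : (Fin k → Bool) → S) (t : ℕ) : ℕ :=
  sInf {r | ∃ p, IsFCIDC f t r p}

/-- `p` is an irregular insdel-distance code of length `r` for the matrix `I`. -/
noncomputable def IsIrregularCode {M : ℕ} (I : Fin M → Fin M → ℕ) (r : ℕ)
    (p : Fin M → List Bool) : Prop :=
  (∀ i, (p i).length = r) ∧ ∀ i j, I i j ≤ dID (p i) (p j)

/-- `N^(1)_ID(I)`: least length of an irregular insdel-distance code for `I`. -/
noncomputable def N1 {M : ℕ} (I : Fin M → Fin M → ℕ) : ℕ :=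
  sInf {r | ∃ p, IsIrregularCode I r p}

/-- `N^(2)_ID(I; K)`: least length `r ≥ K` of an irregular insdel-distance code for `I`. -/
noncomputable def N2 {M : ℕ} (I : Fin M → Fin M → ℕ) (K : ℕ) : ℕ :=
  sInf {r | K ≤ r ∧ ∃ p, IsIrregularCode I r p}

-- The insdel distance matrix `I_f^(1)(t, x₁, …, x_M)`.
open Classical in
noncomputable def Imat1 {k M : ℕ} {S : Type*} (f : (Fin k → Bool) → S) (t : ℕ)
    (x : Fin M → Fin k → Bool) : Fin M → Fin M → ℕ :=
  fun i j => if f (x i) ≠ f (x j) then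
    2 * t + 2 - dID (List.ofFn (x i)) (List.ofFn (x j)) else 0

-- The insdel distance matrix `I_f^(2)(t, x₁, …, x_M)`.
open Classical in
noncomputable def Imat2 {k M : ℕ} {S : Type*} (f : (Fin k → Bool) → S) (t : ℕ)
    (x : Fin M → Fin k → Bool) : Fin M → Fin M → ℕ :=
  fun i j => if f (x i) ≠ f (x j) then
    2 * t + 2 + 2 * k - dID (List.ofFn (x i)) (List.ofFn (x j)) else 0

/-- The function distance `d^f_ID(a,b)`. -/
noncomputable def dfID {k : ℕ} {S : Type*} (f : (Fin k → Bool) → S) (a b : S) : ℕ :=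
  sInf {d | ∃ x y : Fin k → Bool, f x = a ∧ f y = b ∧ dID (List.ofFn x) (List.ofFn y) = d}

/-- The function distance matrix `I_f^(2)(t, f₁, …, f_E)`, with entries
`max(2(t+1+k) − d^f_ID(f_i, f_j), 0)` off the diagonal and `0` on the diagonal. -/
noncomputable def funMat2 {k E : ℕ} {S : Type*} (f : (Fin k → Bool) → S) (t : ℕ)
    (fs : Fin E → S) : Fin E → Fin E → ℕ :=
  fun i j => if i = j then 0 else 2 * (t + 1 + k) - dfID f (fs i) (fs j)

/-- The uniform `M × M` matrix with off-diagonal entries `d` and zero diagonal. -/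
def uniMat (M d : ℕ) : Fin M → Fin M → ℕ := fun i j => if i = j then 0 else d

/-- The number-of-runs function on `F_2^k`. -/
def runsFn (k : ℕ) (x : Fin k → Bool) : ℕ := runs (List.ofFn x)

/-- The VT-syndrome function `f(x) = Σ_{j=1}^k j·x_j mod (k+1)`. -/
def vtFn (k : ℕ) (x : Fin k → Bool) : ℕ :=
  (∑ j : Fin k, ((j : ℕ) + 1) * (if x j then 1 else 0)) % (k + 1)

/-- The function ball `B^f_ID(u, ρ) = f(B_ID(u, ρ))`. -/
def fball {k : ℕ} {S : Type*} (f : (Fin k → Bool) → S) (u : Fin k → Bool) (ρ : ℕ) : Set S :=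
  f '' {v : Fin k → Bool | dID (List.ofFn u) (List.ofFn v) ≤ ρ}

/-- `V_ID(r, d)`: the maximum size of an insdel ball of (integer) radius `d`
among centers in `F_2^r`. -/
noncomputable def Vid (r : ℕ) (d : ℤ) : ℕ :=
  sSup (Set.range fun x : Fin r → Bool =>
    Nat.card {y : Fin r → Bool | (dID (List.ofFn x) (List.ofFn y) : ℤ) ≤ d})

lemma lcs_bddAbove (x y : List Bool) :
    BddAbove {n | ∃ z : List Bool, z.length = n ∧ z.Sublist x ∧ z.Sublist y} := by
  refine ⟨x.length, ?_⟩
  rintro n ⟨z, rfl, hzx, hzy⟩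
  exact hzx.length_le

lemma lcs_exists (x y : List Bool) :
    ∃ z : List Bool, z.length = lcsLen x y ∧ z.Sublist x ∧ z.Sublist y :=
  Nat.sSup_mem (s := {n | ∃ z : List Bool, z.length = n ∧ z.Sublist x ∧ z.Sublist y})
    ⟨0, [], rfl, List.nil_sublist _, List.nil_sublist _⟩ (lcs_bddAbove x y)

lemma le_lcs {x y z : List Bool} (hzx : z.Sublist x) (hzy : z.Sublist y) :
    z.length ≤ lcsLen x y :=
  le_csSup (lcs_bddAbove x y) ⟨z, rfl, hzx, hzy⟩

lemma lcs_le_left (x y : List Bool) : lcsLen x y ≤ x.length := by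
  obtain ⟨z, hz, hzx, _⟩ := lcs_exists x y
  exact hz ▸ hzx.length_le

/-- Decompose a sublist starting with `a`. -/
lemma cons_sublist_split {a : Bool} {w x : List Bool} (h : (a :: w).Sublist x) :
    ∃ x₁ x₂, x = x₁ ++ a :: x₂ ∧ w.Sublist x₂ := by
  obtain ⟨r₁, r₂, rfl, ha, hw⟩ := List.cons_sublist_iff.1 h
  obtain ⟨s, t, rfl⟩ := List.append_of_mem ha
  exact ⟨s, t ++ r₂, by simp, hw.trans (List.sublist_append_right t r₂)⟩

/-- Merge: a common supersequence of size `|x| + |y| - |w|`. -/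
lemma exists_scs : ∀ (w x y : List Bool), w.Sublist x → w.Sublist y →
    ∃ z : List Bool, x.Sublist z ∧ y.Sublist z ∧
      z.length + w.length = x.length + y.length := by
  intro w
  induction w with
  | nil =>
    intro x y _ _
    exact ⟨x ++ y, List.sublist_append_left x y, List.sublist_append_right x y, by simp⟩
  | cons a w ih =>
    intro x y hx hy
    obtain ⟨x₁, x₂, rfl, hwx⟩ := cons_sublist_split hx
    obtain ⟨y₁, y₂, rfl, hwy⟩ := cons_sublist_split hy
    obtain ⟨z, hxz, hyz, hlen⟩ := ih x₂ y₂ hwx hwy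
    refine ⟨x₁ ++ y₁ ++ a :: z, ?_, ?_, ?_⟩
    · have : x₁ ++ a :: x₂ = (x₁ ++ []) ++ a :: x₂ := by simp
      rw [this, List.append_assoc]
      exact List.Sublist.append (by simp) (List.Sublist.cons₂ a hxz)
    · rw [List.append_assoc]
      exact (List.Sublist.append (List.Sublist.refl y₁)
        (List.Sublist.cons₂ a hyz)).trans (List.sublist_append_right x₁ _)
    · simp only [List.length_append, List.length_cons]
      omega

/-- Converse: two sublists of `z` have a common sublist of size `≥ |x| + |y| - |z|`. -/
lemma exists_lcs_of_supseq : ∀ (z x y : List Bool), x.Sublist z → y.Sublist z →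
    ∃ w : List Bool, w.Sublist x ∧ w.Sublist y ∧
      x.length + y.length ≤ z.length + w.length := by
  intro z
  induction z with
  | nil =>
    intro x y hx hy
    rw [List.sublist_nil] at hx hy
    subst hx; subst hy
    exact ⟨[], List.Sublist.refl _, List.Sublist.refl _, by simp⟩
  | cons c z ih =>
    intro x y hx hy
    rcases List.sublist_cons_iff.1 hx with hx' | ⟨x', rfl, hx'⟩
    · rcases List.sublist_cons_iff.1 hy with hy' | ⟨y', rfl, hy'⟩
      · obtain ⟨w, h1, h2, h3⟩ := ih x y hx' hy'
        exact ⟨w, h1, h2, by simp only [List.length_cons]; omega⟩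
      · obtain ⟨w, h1, h2, h3⟩ := ih x y' hx' hy'
        exact ⟨w, h1, h2.trans (List.sublist_cons_self c y'),
          by simp only [List.length_cons]; omega⟩
    · rcases List.sublist_cons_iff.1 hy with hy' | ⟨y', rfl, hy'⟩
      · obtain ⟨w, h1, h2, h3⟩ := ih x' y hx' hy'
        exact ⟨w, h1.trans (List.sublist_cons_self c x'), h2,
          by simp only [List.length_cons]; omega⟩
      · obtain ⟨w, h1, h2, h3⟩ := ih x' y' hx' hy'
        exact ⟨c :: w, List.Sublist.cons₂ c h1, List.Sublist.cons₂ c h2,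
          by simp only [List.length_cons]; omega⟩

theorem stmt0 (n t : ℕ) (hn : 1 ≤ n) (ht : t ≤ n) (x y : List Bool)
    (hx : x.length = n) (hy : y.length = n) :
    (Dset t x ∩ Dset t y = ∅ ↔ Iset t x ∩ Iset t y = ∅) ∧
    (Dset t x ∩ Dset t y = ∅ ↔ 2 * t < dID x y) := by
  have hL := lcs_le_left x y
  rw [hx] at hL
  -- D nonempty ↔ n - t ≤ lcsLen
  have hD : (Dset t x ∩ Dset t y).Nonempty ↔ n - t ≤ lcsLen x y := by
    constructor
    · rintro ⟨z, ⟨hz1, hz2⟩, ⟨hz3, hz4⟩⟩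
      rw [hx] at hz1
      exact hz1 ▸ le_lcs hz2 hz4
    · intro h
      obtain ⟨z, hz, hzx, hzy⟩ := lcs_exists x y
      refine ⟨z.take (n - t), ⟨?_, (z.take_sublist _).trans hzx⟩,
        ⟨?_, (z.take_sublist _).trans hzy⟩⟩ <;>
        simp [hx, hy, hz] <;> omega
  -- I nonempty ↔ n - t ≤ lcsLen
  have hI : (Iset t x ∩ Iset t y).Nonempty ↔ n - t ≤ lcsLen x y := by
    constructor
    · rintro ⟨z, ⟨hz1, hz2⟩, ⟨hz3, hz4⟩⟩
      obtain ⟨w, hwx, hwy, hlen⟩ := exists_lcs_of_supseq z x y hz2 hz4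
      have := le_lcs hwx hwy
      rw [hx] at hz1
      rw [hx, hy, hz1] at hlen
      omega
    · intro h
      obtain ⟨w, hw, hwx, hwy⟩ := lcs_exists x y
      obtain ⟨z, hxz, hyz, hlen⟩ := exists_scs w x y hwx hwy
      have hzlen : z.length ≤ n + t := by rw [hx, hy, hw] at hlen; omega
      refine ⟨z ++ List.replicate (n + t - z.length) true,
        ⟨?_, hxz.trans (List.sublist_append_left _ _)⟩,
        ⟨?_, hyz.trans (List.sublist_append_left _ _)⟩⟩ <;>
        simp [hx, hy] <;> omega
  -- dID > 2t ↔ ¬ (n - t ≤ lcsLen)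
  have hdid : 2 * t < dID x y ↔ ¬ n - t ≤ lcsLen x y := by
    unfold dID
    rw [hx, hy]
    omega
  rw [← Set.not_nonempty_iff_eq_empty, ← Set.not_nonempty_iff_eq_empty, hD, hI, hdid]
  exact ⟨Iff.rfl, Iff.rfl⟩
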